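/- Let (S_t)_{t≥0} be a discrete-time martingale with respect to a filtration (𝓕_t)_{t≥0}, with S₀ = 0 and increments μ_{t+1} = S_{t+1} − S_t. Suppose there exists c > 0 such that |μ_{t+1}| ≤ c almost surely for all t ≥ 0, and define V(t+1) = ∑_{i=0}^{t} E[μ_{i+1}² | 𝓕_i]. Then for every α, β > 0, P( there exists t ≥ 1 with S_t ≥ α and V(t) ≤ β ) ≤ exp( −α² / (2(β + cα)) ). -/

import Mathlib

open MeasureTheory

theorem freedman_exp_bound {y b : ℝ} (hb : b ≤ 1) (hy : |y| ≤ b) :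
    Real.exp y ≤ 1 + y + (1/2 + 2*b/9) * y^2 := by
  have h0b : 0 ≤ b := le_trans (abs_nonneg y) hy
  have h1 : |y| ≤ 1 := hy.trans hb
  have h := Real.exp_bound h1 (n := 3) (by norm_num)
  have hsum : ∑ m ∈ Finset.range 3, y ^ m / m.factorial = 1 + y + y^2/2 := by
    rw [Finset.sum_range_succ, Finset.sum_range_succ, Finset.sum_range_one]
    norm_num [Nat.factorial]
  rw [hsum] at h
  have h2 : Real.exp y - (1 + y + y^2/2) ≤ |y|^3 * ((3:ℕ).succ / ((3:ℕ).factorial * 3)) :=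
    (abs_sub_le_iff.1 h).1
  have h3 : |y|^3 * ((3:ℕ).succ / ((3:ℕ).factorial * 3)) = (2/9) * (|y| * y^2) := by
    simp [Nat.factorial]
    rw [pow_succ, sq_abs]
    ring
  rw [h3] at h2
  nlinarith [sq_nonneg y, mul_le_mul_of_nonneg_right hy (sq_nonneg y)]

/-- Freedman's inequality: for a martingale `(S_t)` with `S₀ = 0`, increments bounded by
`c`, and predictable quadratic variation `V(t+1) = ∑_{i=0}^t E[μ_{i+1}² | 𝓕_i]`,
`P(∃ t ≥ 1, S_t ≥ α and V(t) ≤ β) ≤ exp(-α²/(2(β + cα)))`. -/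
theorem freedman_inequality
    {Ω : Type*} {m0 : MeasurableSpace Ω} {μ : Measure Ω} [IsProbabilityMeasure μ]
    (𝓕 : Filtration ℕ m0) (S : ℕ → Ω → ℝ)
    (hmart : Martingale S 𝓕 μ)
    (hS0 : ∀ ω, S 0 ω = 0)
    (c : ℝ) (hc : 0 < c)
    (hbdd : ∀ t : ℕ, ∀ᵐ ω ∂μ, |S (t + 1) ω - S t ω| ≤ c)
    (V : ℕ → Ω → ℝ)
    (hV : ∀ t : ℕ, ∀ ω, V (t + 1) ω =
      ∑ i ∈ Finset.range (t + 1), (μ[fun ω' => (S (i + 1) ω' - S i ω') ^ 2|𝓕 i]) ω)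
    (α β : ℝ) (hα : 0 < α) (hβ : 0 < β) :
    (μ {ω | ∃ t : ℕ, 1 ≤ t ∧ α ≤ S t ω ∧ V t ω ≤ β}).toReal ≤
      Real.exp (-α ^ 2 / (2 * (β + c * α))) := by
  -- basic constants
  have hs : (0:ℝ) < β + c * α := by positivity
  set L : ℝ := α / (β + c * α) with hLdef
  have hL : 0 < L := by positivity
  have hb1 : L * c ≤ 1 := by
    rw [hLdef, div_mul_eq_mul_div, div_le_one hs]
    nlinarith
  have hb0 : 0 < L * c := by positivity
  set g : ℝ := (1/2 + 2*(L*c)/9) * L^2 with hgdef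
  have hg : 0 ≤ g := by positivity
  -- the conditional quadratic increments
  set Q : ℕ → Ω → ℝ := fun i => μ[fun ω' => (S (i + 1) ω' - S i ω') ^ 2|𝓕 i] with hQdef
  -- the predictable quadratic variation, well-defined also at 0
  set W : ℕ → Ω → ℝ := fun t ω => ∑ i ∈ Finset.range t, Q i ω with hWdef
  -- the exponential supermartingale
  set M : ℕ → Ω → ℝ := fun t ω => Real.exp (L * S t ω - g * W t ω) with hMdef
  have hM0 : M 0 = fun _ => (1:ℝ) := by
    funext ω; simp [hMdef, hWdef, hS0 ω]
  -- measurability facts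
  have hQsm : ∀ i, StronglyMeasurable[𝓕 i] (Q i) := fun i => stronglyMeasurable_condExp
  have hWsm : ∀ t, StronglyMeasurable[𝓕 t] (W t) := by
    intro t
    apply Finset.stronglyMeasurable_fun_sum
    intro i hi
    exact (hQsm i).mono (𝓕.mono (Finset.mem_range.mp hi).le)
  have hMsm : ∀ t, StronglyMeasurable[𝓕 t] (M t) := by
    intro t
    exact Real.continuous_exp.comp_stronglyMeasurable
      ((((hmart.stronglyMeasurable t).const_mul L)).sub ((hWsm t).const_mul g))
  -- a.e. facts: increments bounded and Q nonneg
  have hDae : ∀ᵐ ω ∂μ, ∀ i : ℕ, |S (i + 1) ω - S i ω| ≤ c := (ae_all_iff).mpr hbdd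
  have hQae : ∀ᵐ ω ∂μ, ∀ i : ℕ, 0 ≤ Q i ω := by
    rw [ae_all_iff]
    intro i
    exact condExp_nonneg (Filter.Eventually.of_forall fun ω => sq_nonneg _)
  -- a.e. bound on S
  have hSae : ∀ᵐ ω ∂μ, ∀ t : ℕ, S t ω ≤ t * c := by
    filter_upwards [hDae] with ω hω
    intro t
    have : S t ω = ∑ i ∈ Finset.range t, (S (i+1) ω - S i ω) := by
      rw [Finset.sum_range_sub (fun i => S i ω), hS0 ω, sub_zero]
    rw [this]
    calc ∑ i ∈ Finset.range t, (S (i+1) ω - S i ω) ≤ ∑ i ∈ Finset.range t, c :=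
          Finset.sum_le_sum fun i _ => (le_of_abs_le (hω i))
      _ = t * c := by simp [mul_comm]
  -- integrability of M
  have hMint : ∀ t, Integrable (M t) μ := by
    intro t
    apply Integrable.mono' (integrable_const (Real.exp (L * (t * c))))
      ((hMsm t).mono (𝓕.le t)).aestronglyMeasurable
    filter_upwards [hSae, hQae] with ω hS hQ
    rw [Real.norm_eq_abs, abs_of_pos (Real.exp_pos _), Real.exp_le_exp]
    have hW0 : 0 ≤ W t ω := Finset.sum_nonneg fun i _ => hQ i
    nlinarith [hS t, hL.le]
  -- integrability of increments squared and exp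
  have hD2int : ∀ t, Integrable (fun ω => (S (t+1) ω - S t ω)^2) μ := by
    intro t
    apply Integrable.mono' (integrable_const (c^2))
      (((((hmart.stronglyMeasurable (t+1)).mono (𝓕.le _)).sub
        ((hmart.stronglyMeasurable t).mono (𝓕.le _)))).pow 2).aestronglyMeasurable
    filter_upwards [hbdd t] with ω hω
    simp only [Pi.pow_apply, Pi.sub_apply]
    rw [Real.norm_eq_abs, abs_of_nonneg (sq_nonneg _)]
    nlinarith [abs_nonneg (S (t+1) ω - S t ω), sq_abs (S (t+1) ω - S t ω)]
  have hEint : ∀ t, Integrable (fun ω => Real.exp (L * (S (t+1) ω - S t ω))) μ := by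
    intro t
    apply Integrable.mono' (integrable_const (Real.exp (L * c)))
      (Real.continuous_exp.comp_stronglyMeasurable
        ((((hmart.stronglyMeasurable (t+1)).mono (𝓕.le _)).sub
          ((hmart.stronglyMeasurable t).mono (𝓕.le _))).const_mul L)).aestronglyMeasurable
    filter_upwards [hbdd t] with ω hω
    rw [Real.norm_eq_abs, abs_of_pos (Real.exp_pos _), Real.exp_le_exp]
    exact mul_le_mul_of_nonneg_left (le_of_abs_le hω) hL.le
  -- the supermartingale property
  have hsuper : Supermartingale M 𝓕 μ := by
    apply supermartingale_nat (fun t => hMsm t) hMint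
    intro t
    -- factorization M (t+1) = A * E
    set A : Ω → ℝ := fun ω => M t ω * Real.exp (-(g * Q t ω)) with hAdef
    set E : Ω → ℝ := fun ω => Real.exp (L * (S (t+1) ω - S t ω)) with hEdef
    have hfact : M (t+1) = A * E := by
      funext ω
      simp only [hAdef, hEdef, hMdef, hWdef, Pi.mul_apply]
      rw [← Real.exp_add, ← Real.exp_add, Finset.sum_range_succ]
      ring_nf
    have hAsm : StronglyMeasurable[𝓕 t] A :=
      (hMsm t).mul (Real.continuous_exp.comp_stronglyMeasurable ((hQsm t).const_mul g).neg)
    have hpull : μ[M (t+1)|𝓕 t] =ᵐ[μ] A * μ[E|𝓕 t] := by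
      rw [hfact]
      exact condExp_mul_of_stronglyMeasurable_left hAsm (hfact ▸ hMint (t+1)) (hEint t)
    -- bound the conditional expectation of E
    have hcond : μ[E|𝓕 t] ≤ᵐ[μ] fun ω => Real.exp (g * Q t ω) := by
      set P : Ω → ℝ := fun ω => 1 + L * (S (t+1) ω - S t ω) + g * (S (t+1) ω - S t ω)^2
        with hPdef
      have hPint : Integrable P μ := by
        apply Integrable.add
        · exact (integrable_const (1:ℝ)).add
            (((hmart.integrable (t+1)).sub (hmart.integrable t)).const_mul L)
        · exact (hD2int t).const_mul g
      have h1 : E ≤ᵐ[μ] P := by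
        filter_upwards [hbdd t] with ω hω
        have hy : |L * (S (t+1) ω - S t ω)| ≤ L * c := by
          rw [abs_mul, abs_of_pos hL]
          exact mul_le_mul_of_nonneg_left hω hL.le
        have := freedman_exp_bound hb1 hy
        calc E ω ≤ 1 + L * (S (t+1) ω - S t ω)
              + (1/2 + 2*(L*c)/9) * (L * (S (t+1) ω - S t ω))^2 := this
          _ = P ω := by simp only [hPdef, hgdef]; ring
      have h2 : μ[E|𝓕 t] ≤ᵐ[μ] μ[P|𝓕 t] := condExp_mono (hEint t) hPint h1
      -- compute condexp of P
      have hP_eq : P = (fun _ => (1:ℝ)) + (L • (fun ω => S (t+1) ω - S t ω)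
          + g • (fun ω => (S (t+1) ω - S t ω)^2)) := by
        funext ω; simp [hPdef]; ring
      have h3 : μ[P|𝓕 t] =ᵐ[μ] fun ω => 1 + g * Q t ω := by
        rw [hP_eq]
        have hd : μ[fun ω => S (t+1) ω - S t ω|𝓕 t] =ᵐ[μ] fun _ => (0:ℝ) := by
          refine (condExp_sub (hmart.integrable (t+1)) (hmart.integrable t) _).trans ?_
          filter_upwards [hmart.condExp_ae_eq (Nat.le_succ t),
            hmart.condExp_ae_eq (le_refl t)] with ω ha hb
          simp only [Pi.sub_apply, ha, hb, sub_self]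
        have hfA : Integrable (L • fun ω => S (t+1) ω - S t ω) μ :=
          ((hmart.integrable (t+1)).sub (hmart.integrable t)).smul L
        have hfB : Integrable (g • fun ω => (S (t+1) ω - S t ω)^2) μ := (hD2int t).smul g
        have e2 : μ[L • fun ω => S (t+1) ω - S t ω|𝓕 t] =ᵐ[μ] fun _ => (0:ℝ) := by
          refine (condExp_smul _ _ _).trans ?_
          filter_upwards [hd] with ω hω
          simp only [Pi.smul_apply, hω, smul_zero]
        have e3 : μ[g • fun ω => (S (t+1) ω - S t ω)^2|𝓕 t] =ᵐ[μ] g • Q t :=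
          (condExp_smul _ _ _).trans (Filter.Eventually.of_forall fun ω => rfl)
        refine (condExp_add (integrable_const _) (hfA.add hfB) _).trans ?_
        have e4 := (condExp_add hfA hfB _).trans (e2.add e3)
        filter_upwards [e4] with ω h
        simp only [Pi.add_apply] at h ⊢
        rw [h, condExp_const (𝓕.le t)]
        simp only [Pi.smul_apply, smul_eq_mul, Pi.zero_apply]
        ring
      refine h2.trans (h3.le.trans ?_)
      filter_upwards with ω
      linarith [Real.add_one_le_exp (g * Q t ω)]
    -- combine
    calc μ[M (t+1)|𝓕 t] ≤ᵐ[μ] A * (fun ω => Real.exp (g * Q t ω)) := by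
          filter_upwards [hpull, hcond] with ω h1 h2
          rw [h1]
          exact mul_le_mul_of_nonneg_left h2
            (mul_nonneg (Real.exp_pos _).le (Real.exp_pos _).le)
      _ =ᵐ[μ] M t := by
          filter_upwards with ω
          simp only [hAdef, Pi.mul_apply]
          rw [mul_assoc, ← Real.exp_add, neg_add_cancel, Real.exp_zero, mul_one]
  -- constants for the maximal inequality
  set K : ℝ := Real.exp (L * α - g * β) with hKdef
  have hK : 0 < K := Real.exp_pos _
  -- the events up to horizon n
  set A : ℕ → Set Ω := fun n => {ω | ∃ t, 1 ≤ t ∧ t ≤ n ∧ α ≤ S t ω ∧ V t ω ≤ β} with hAdef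
  have hmeasA : ∀ n, MeasurableSet (A n) := by
    intro n
    have hrw : A n = ⋃ t, ⋃ (_ : 1 ≤ t ∧ t ≤ n), ({ω | α ≤ S t ω} ∩ {ω | V t ω ≤ β}) := by
      ext ω
      constructor
      · rintro ⟨t, h1, h2, h3, h4⟩
        exact Set.mem_iUnion.2 ⟨t, Set.mem_iUnion.2 ⟨⟨h1, h2⟩, h3, h4⟩⟩
      · intro h
        obtain ⟨t, ht⟩ := Set.mem_iUnion.1 h
        obtain ⟨⟨h1, h2⟩, h3, h4⟩ := Set.mem_iUnion.1 ht
        exact ⟨t, h1, h2, h3, h4⟩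
    rw [hrw]
    refine MeasurableSet.iUnion fun t => MeasurableSet.iUnion fun ht => ?_
    have hSm : Measurable (S t) := ((hmart.stronglyMeasurable t).mono (𝓕.le t)).measurable
    have hVm : Measurable (V t) := by
      obtain ⟨u, rfl⟩ : ∃ u, t = u + 1 := ⟨t - 1, (Nat.succ_pred_eq_of_pos ht.1).symm⟩
      have : V (u+1) = W (u+1) := funext fun ω => hV u ω
      rw [this]
      exact ((hWsm (u+1)).mono (𝓕.le _)).measurable
    exact (measurableSet_le measurable_const hSm).inter (measurableSet_le hVm measurable_const)
  -- per-horizon maximal bound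
  have hbound : ∀ n, K * (μ (A n)).toReal ≤ 1 := by
    intro n
    set τ : Ω → WithTop ℕ := fun ω => (hittingBtwn M (Set.Ici K) 0 n ω : ℕ) with hτdef
    have hτ : IsStoppingTime 𝓕 τ := hsuper.stronglyAdapted.adapted.isStoppingTime_hittingBtwn measurableSet_Ici
    have hτle : ∀ ω, τ ω ≤ n := fun ω => WithTop.coe_le_coe.mpr (hittingBtwn_le ω)
    have hstopint : Integrable (stoppedValue M τ) μ :=
      integrable_stoppedValue ℕ hτ hMint hτle
    -- optional stopping
    have hneg : stoppedValue (-M) τ = fun ω => -stoppedValue M τ ω := rfl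
    have hneg0 : ∀ τ' : Ω → WithTop ℕ, stoppedValue (-M) τ' = fun ω => -stoppedValue M τ' ω := fun _ => rfl
    have hOS : ∫ ω, stoppedValue M τ ω ∂μ ≤ 1 := by
      have h1 := Submartingale.expected_stoppedValue_mono hsuper.neg
        (isStoppingTime_const 𝓕 0) hτ (fun ω => zero_le) hτle
      rw [hneg, hneg0, integral_neg, integral_neg, neg_le_neg_iff] at h1
      refine h1.trans ?_
      rw [stoppedValue_const, hM0]
      simp
    -- on the event, the stopped value is at least K
    have hKle : ∀ ω ∈ A n, K ≤ stoppedValue M τ ω := by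
      rintro ω ⟨t, ht1, htn, hSα, hVβ⟩
      have hWβ : W t ω ≤ β := by
        obtain ⟨u, rfl⟩ : ∃ u, t = u + 1 := ⟨t - 1, (Nat.succ_pred_eq_of_pos ht1).symm⟩
        exact le_of_eq_of_le (hV u ω).symm hVβ
      have hMt : M t ω ∈ Set.Ici K := by
        rw [Set.mem_Ici, hKdef, hMdef, Real.exp_le_exp]
        have := mul_le_mul_of_nonneg_left hSα hL.le
        have := mul_le_mul_of_nonneg_left hWβ hg
        linarith
      exact stoppedValue_hittingBtwn_mem ⟨t, ⟨Nat.zero_le t, htn⟩, hMt⟩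
    have h2 : K * (μ (A n)).toReal ≤ ∫ ω in A n, stoppedValue M τ ω ∂μ :=
      (le_of_eq (by rw [smul_eq_mul, mul_comm, measureReal_def])).trans <| setIntegral_ge_of_const_le (hmeasA n) (measure_ne_top μ _) hKle hstopint.integrableOn
    have h3 : ∫ ω in A n, stoppedValue M τ ω ∂μ ≤ ∫ ω, stoppedValue M τ ω ∂μ := by
      refine setIntegral_le_integral hstopint ?_
      filter_upwards with ω
      rw [hMdef]
      simp only [stoppedValue, Pi.zero_apply]
      exact (Real.exp_pos _).le
    exact h2.trans (h3.trans hOS)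
  -- conclude: the event is the increasing union of the `A n`
  set R : ℝ := Real.exp (-α ^ 2 / (2 * (β + c * α))) with hRdef
  have hR0 : 0 ≤ R := (Real.exp_pos _).le
  have hKR : 1 / K ≤ R := by
    rw [one_div, hKdef, ← Real.exp_neg, hRdef, Real.exp_le_exp, hgdef, hLdef]
    rw [neg_div, neg_le_neg_iff, div_le_iff₀ (by positivity : (0:ℝ) < 2*(β+c*α))]
    have h9 : (0:ℝ) < (β + c*α)^3 := by positivity
    have key : α / (β + c * α) * α -
        (1 / 2 + 2 * (α / (β + c * α) * c) / 9) * (α / (β + c * α)) ^ 2 * β =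
        (α^2 * (β + c*α)^2 - α^2*β*(β + c*α)/2 - 2*c*α^3*β/9) / (β + c*α)^3 := by
      field_simp
      ring
    rw [key, div_mul_eq_mul_div, le_div_iff₀ h9, ← sub_nonneg]
    have hfact : (α^2 * (β + c*α)^2 - α^2*β*(β + c*α)/2 - 2*c*α^3*β/9) * (2*(β+c*α))
        - α^2 * (β + c*α)^3 = α^2 * (β+c*α) * (c*α*(β+c*α) - 4*(c*α)*β/9) := by ring
    rw [hfact]
    refine mul_nonneg (mul_nonneg (sq_nonneg α) hs.le) ?_
    nlinarith [mul_pos hc hα]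
  have hsub : {ω | ∃ t : ℕ, 1 ≤ t ∧ α ≤ S t ω ∧ V t ω ≤ β} ⊆ ⋃ n, A n := by
    rintro ω ⟨t, ht1, hSα, hVβ⟩
    exact Set.mem_iUnion.mpr ⟨t, t, ht1, le_refl t, hSα, hVβ⟩
  have hmono : Monotone A := by
    intro n m hnm ω
    rintro ⟨t, ht1, htn, h⟩
    exact ⟨t, ht1, htn.trans hnm, h⟩
  have hμle : μ {ω | ∃ t : ℕ, 1 ≤ t ∧ α ≤ S t ω ∧ V t ω ≤ β} ≤ ENNReal.ofReal R := by
    refine (measure_mono hsub).trans ?_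
    rw [hmono.directed_le.measure_iUnion]
    refine iSup_le fun n => ?_
    refine (ENNReal.le_ofReal_iff_toReal_le (measure_ne_top μ _) hR0).mpr ?_
    have := hbound n
    have h4 : (μ (A n)).toReal ≤ 1 / K := by
      rw [le_div_iff₀ hK]
      linarith
    exact h4.trans hKR
  exact ENNReal.toReal_le_of_le_ofReal hR0 hμle
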